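/- arXiv:1902.09176 — 2 statements merged into one kernel-verified Lean document; each statement's English description precedes it below -/
import Mathlib

section
/- The operator ⋄ on subcategories of an abelian category is associative: for subcategories U₁, U₂, U₃ of an abelian category A, (U₁ ⋄ U₂) ⋄ U₃ = U₁ ⋄ (U₂ ⋄ U₃). -/
open CategoryTheory CategoryTheory.Limits

attribute [local instance] CategoryTheory.Abelian.hasFiniteBiproducts

universe v u

variable {A : Type u} [Category.{v} A] [Abelian A]

/-- The objects that are direct summands of finite direct sums of objects from `S`. -/
def addClosure (S : Set A) : Set A :=
  {X | ∃ (n : ℕ) (f : Fin n → A) (Y : A),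
    (∀ i, f i ∈ S) ∧ Nonempty ((X ⊞ Y) ≅ ⨁ f)}

/-- The operator `U ⋄ V`: the additive closure of the middle terms of short exact
sequences with outer terms in `U` and `V`. -/
def diamondSet (U V : Set A) : Set A :=
  addClosure {X | ∃ S : ShortComplex A,
    S.ShortExact ∧ S.X₂ = X ∧ S.X₁ ∈ U ∧ S.X₃ ∈ V}

/-- The filtration `⟨S⟩ₙ`. -/
def bracket (S : Set A) : ℕ → Set A
  | 0 => {X | IsZero X}
  | 1 => addClosure S
  | n + 2 => diamondSet (addClosure S) (bracket S (n + 1))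

/-- The extension dimension of an abelian category. -/
noncomputable def extDim (A : Type u) [Category.{v} A] [Abelian A] : ℕ∞ :=
  sInf {n : ℕ∞ | ∃ (k : ℕ) (T : A), (k : ℕ∞) = n ∧ bracket {T} (k + 1) = Set.univ}

/-- `ClassRes P n X` : there is an exact sequence `0 → Pₙ → ⋯ → P₀ → X → 0` with all `Pᵢ ∈ P`. -/
def ClassRes (P : Set A) : ℕ → A → Prop
  | 0, X => X ∈ P
  | n + 1, X => ∃ S : ShortComplex A,
      S.ShortExact ∧ S.X₃ = X ∧ S.X₂ ∈ P ∧ ClassRes P n S.X₁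

/-- `ClassCores I n X` : there is an exact sequence `0 → X → I₀ → ⋯ → Iₙ → 0` with all `Iᵢ ∈ I`. -/
def ClassCores (I : Set A) : ℕ → A → Prop
  | 0, X => X ∈ I
  | n + 1, X => ∃ S : ShortComplex A,
      S.ShortExact ∧ S.X₁ = X ∧ S.X₂ ∈ I ∧ ClassCores I n S.X₃

section AuxIso

open ZeroObject

/-- `X ⊞ 0 ≅ X`. -/
noncomputable def myBiprodZeroIso (X : A) : X ⊞ (0 : A) ≅ X where
  hom := biprod.fst
  inv := biprod.lift (𝟙 X) 0
  hom_inv_id := by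
    apply biprod.hom_ext' <;> apply biprod.hom_ext <;> simp
  inv_hom_id := by simp

/-- Biproduct over `Fin 0` is zero. -/
lemma myIsZeroBiproductFinZero (f : Fin 0 → A) : IsZero (⨁ f) := by
  rw [IsZero.iff_id_eq_zero]
  apply biproduct.hom_ext
  intro i
  exact i.elim0

/-- Biproduct over `Fin 1`. -/
noncomputable def myBiproductFinOneIso (f : Fin 1 → A) : ⨁ f ≅ f 0 where
  hom := biproduct.π f 0
  inv := biproduct.ι f 0
  hom_inv_id := by
    apply biproduct.hom_ext'
    intro j
    have : j = 0 := Subsingleton.elim _ _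
    subst this
    simp
  inv_hom_id := by simp

/-- Biproduct over a sum type. -/
noncomputable def myBiproductSumIso {J K : Type} [Fintype J] [Fintype K]
    [DecidableEq J] [DecidableEq K] (f : J → A) (g : K → A) :
    ⨁ (Sum.elim f g) ≅ (⨁ f) ⊞ (⨁ g) where
  hom := biprod.lift (biproduct.lift fun j => biproduct.π _ (Sum.inl j))
      (biproduct.lift fun k => biproduct.π _ (Sum.inr k))
  inv := biprod.desc (biproduct.desc fun j => biproduct.ι (Sum.elim f g) (Sum.inl j))
      (biproduct.desc fun k => biproduct.ι (Sum.elim f g) (Sum.inr k))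
  hom_inv_id := by
    erw [biprod.lift_desc, biproduct.lift_desc, biproduct.lift_desc, ← biproduct.total,
      Fintype.sum_sum_type]
    rfl
  inv_hom_id := by
    apply biprod.hom_ext' <;> apply biprod.hom_ext <;>
      apply biproduct.hom_ext' <;> intro j <;> apply biproduct.hom_ext <;> intro k <;>
      simp [biproduct.ι_π] <;> erw [biproduct.lift_π, biproduct.ι_desc_assoc, biproduct.ι_π] <;>
      split_ifs <;> grind

end AuxIso

section AddClosureLemmas

open ZeroObject

lemma mem_addClosure_of_mem {S : Set A} {X : A} (h : X ∈ S) : X ∈ addClosure S :=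
  ⟨1, fun _ => X, 0, fun _ => h, ⟨myBiprodZeroIso X ≪≫ (myBiproductFinOneIso fun _ => X).symm⟩⟩

lemma zero_mem_addClosure (S : Set A) : (0 : A) ∈ addClosure S := by
  refine ⟨0, fun i => i.elim0, 0, fun i => i.elim0, ⟨?_⟩⟩
  exact ((isZero_zero A).of_iso (myBiprodZeroIso 0)).iso (myIsZeroBiproductFinZero _)

lemma mem_addClosure_of_iso {S : Set A} {X X' : A} (e : X ≅ X') (h : X ∈ addClosure S) :
    X' ∈ addClosure S := by
  obtain ⟨n, f, Y, hf, ⟨φ⟩⟩ := h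
  exact ⟨n, f, Y, hf, ⟨biprod.mapIso e.symm (Iso.refl Y) ≪≫ φ⟩⟩

lemma mem_addClosure_of_summand {S : Set A} {X R Z : A} (e : X ⊞ R ≅ Z)
    (h : Z ∈ addClosure S) : X ∈ addClosure S := by
  obtain ⟨n, f, Y, hf, ⟨φ⟩⟩ := h
  exact ⟨n, f, R ⊞ Y, hf,
    ⟨(biprod.associator X R Y).symm ≪≫ biprod.mapIso e (Iso.refl Y) ≪≫ φ⟩⟩

lemma exists_biprod_iso_biproduct {n m : ℕ} (f : Fin n → A) (g : Fin m → A) :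
    ∃ h : Fin (n + m) → A, (∀ i, (∃ j, h i = f j) ∨ (∃ j, h i = g j)) ∧
      Nonempty (((⨁ f) ⊞ (⨁ g)) ≅ ⨁ h) := by
  refine ⟨Sum.elim f g ∘ finSumFinEquiv.symm, fun i => ?_, ⟨?_⟩⟩
  · rcases hi : finSumFinEquiv.symm i with j | k
    · exact Or.inl ⟨j, by simp [hi]⟩
    · exact Or.inr ⟨k, by simp [hi]⟩
  · exact (myBiproductSumIso f g).symm ≪≫
      biproduct.whiskerEquiv finSumFinEquiv (fun j => eqToIso (by simp))

lemma biprod_mem_addClosure {S : Set A} {X Z : A} (hX : X ∈ addClosure S)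
    (hZ : Z ∈ addClosure S) : (X ⊞ Z) ∈ addClosure S := by
  obtain ⟨n, f, Y, hf, ⟨φ⟩⟩ := hX
  obtain ⟨m, g, Y', hg, ⟨ψ⟩⟩ := hZ
  obtain ⟨h, hh, ⟨χ⟩⟩ := exists_biprod_iso_biproduct f g
  refine ⟨n + m, h, Y ⊞ Y', fun i => ?_, ⟨?_⟩⟩
  · rcases hh i with ⟨j, e⟩ | ⟨j, e⟩
    · rw [e]; exact hf j
    · rw [e]; exact hg j
  · -- (X ⊞ Z) ⊞ (Y ⊞ Y') ≅ (X ⊞ Y) ⊞ (Z ⊞ Y')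
    refine ?_ ≪≫ biprod.mapIso φ ψ ≪≫ χ
    exact
      { hom := biprod.lift (biprod.map biprod.fst biprod.fst) (biprod.map biprod.snd biprod.snd)
        inv := biprod.lift (biprod.map biprod.fst biprod.fst) (biprod.map biprod.snd biprod.snd)
        hom_inv_id := by
          apply biprod.hom_ext' <;> apply biprod.hom_ext <;>
            apply biprod.hom_ext <;> simp
        inv_hom_id := by
          apply biprod.hom_ext' <;> apply biprod.hom_ext <;>
            apply biprod.hom_ext <;> simp }

lemma biproduct_mem_addClosure {S : Set A} :
    ∀ {n : ℕ} (f : Fin n → A), (∀ i, f i ∈ addClosure S) → (⨁ f) ∈ addClosure S := by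
  intro n
  induction n with
  | zero =>
    intro f _
    exact mem_addClosure_of_iso ((myIsZeroBiproductFinZero f).iso (isZero_zero A)).symm
      (zero_mem_addClosure S)
  | succ n ih =>
    intro f hf
    have h1 : (f 0 ⊞ ⨁ (fun i : Fin n => f i.succ)) ∈ addClosure S :=
      biprod_mem_addClosure (hf 0) (ih _ fun i => hf i.succ)
    refine mem_addClosure_of_iso ?_ h1
    refine (biprod.mapIso (myBiproductFinOneIso fun _ : Fin 1 => f 0)
      (Iso.refl _)).symm ≪≫
      (myBiproductSumIso (fun _ : Fin 1 => f 0) (fun i : Fin n => f i.succ)).symm ≪≫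
      biproduct.whiskerEquiv (finSumFinEquiv.trans (finCongr (Nat.add_comm 1 n)))
        (fun j => eqToIso ?_)
    rcases j with j | k
    · have hj : j = 0 := Subsingleton.elim _ _
      subst hj
      exact congrArg f (by ext; simp)
    · exact congrArg f (show _ = k.succ by ext; simp [Nat.add_comm])

lemma addClosure_idem (S : Set A) : addClosure (addClosure S) = addClosure S := by
  apply Set.Subset.antisymm
  · rintro X ⟨n, f, Y, hf, ⟨φ⟩⟩
    exact mem_addClosure_of_summand φ (biproduct_mem_addClosure f hf)
  · exact fun X h => mem_addClosure_of_mem h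

lemma addClosure_mono {S T : Set A} (h : S ⊆ T) : addClosure S ⊆ addClosure T := by
  rintro X ⟨n, f, Y, hf, ⟨φ⟩⟩
  exact ⟨n, f, Y, fun i => h (hf i), ⟨φ⟩⟩

end AddClosureLemmas

section SESLemmas

open ZeroObject

/-- Transport a short exact sequence along an isomorphism of the middle object. -/
lemma shortExact_X₂iso {S : ShortComplex A} (hS : S.ShortExact) {X : A} (e : S.X₂ ≅ X) :
    (ShortComplex.mk (S.f ≫ e.hom) (e.inv ≫ S.g)
      (by rw [Category.assoc, Iso.hom_inv_id_assoc, S.zero])).ShortExact := by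
  refine ShortComplex.shortExact_of_iso ?_ hS
  exact ShortComplex.isoMk (Iso.refl _) e (Iso.refl _) (by simp) (by simp)

/-- Transport a short exact sequence along an isomorphism of the third object. -/
lemma shortExact_X₃iso {S : ShortComplex A} (hS : S.ShortExact) {X : A} (e : S.X₃ ≅ X) :
    (ShortComplex.mk S.f (S.g ≫ e.hom)
      (by rw [← Category.assoc, S.zero, zero_comp])).ShortExact := by
  refine ShortComplex.shortExact_of_iso ?_ hS
  exact ShortComplex.isoMk (Iso.refl _) (Iso.refl _) e (by simp) (by simp)

/-- Transport a short exact sequence along an isomorphism of the first object. -/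
lemma shortExact_X₁iso {S : ShortComplex A} (hS : S.ShortExact) {X : A} (e : X ≅ S.X₁) :
    (ShortComplex.mk (e.hom ≫ S.f) S.g
      (by rw [Category.assoc, S.zero, comp_zero])).ShortExact := by
  refine ShortComplex.shortExact_of_iso ?_ hS
  exact ShortComplex.isoMk e.symm (Iso.refl _) (Iso.refl _) (by simp) (by simp)

/-- The trivial short exact sequence `0 → N → N → 0 → 0`. -/
lemma shortExact_id_zero (N : A) :
    (ShortComplex.mk (𝟙 N) (0 : N ⟶ (0 : A)) (by simp)).ShortExact := by
  refine ShortComplex.ShortExact.mk' ?_ ?_ ?_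
  · rw [ShortComplex.exact_iff_epi _ rfl]
    infer_instance
  · infer_instance
  · exact ⟨fun u v _ => (isZero_zero A).eq_of_src u v⟩

/-- The trivial short exact sequence `0 → 0 → N → N → 0`. -/
lemma shortExact_zero_id (N : A) :
    (ShortComplex.mk (0 : (0 : A) ⟶ N) (𝟙 N) (by simp)).ShortExact := by
  refine ShortComplex.ShortExact.mk' ?_ ?_ ?_
  · rw [ShortComplex.exact_iff_mono _ rfl]
    infer_instance
  · exact ⟨fun u v _ => (isZero_zero A).eq_of_tgt u v⟩
  · infer_instance

/-- Binary biproduct of short exact sequences is short exact. -/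
lemma shortExact_binaryBiprod {S T : ShortComplex A} (hS : S.ShortExact) (hT : T.ShortExact) :
    (ShortComplex.mk (biprod.map S.f T.f) (biprod.map S.g T.g)
      (by ext <;> simp [S.zero, T.zero])).ShortExact := by
  have hmono : Mono (biprod.map S.f T.f) := by
    have := hS.mono_f; have := hT.mono_f
    apply Preadditive.mono_of_cancel_zero
    intro Z a ha
    apply biprod.hom_ext
    · rw [← cancel_mono S.f, Category.assoc, ← biprod.map_fst, ← Category.assoc, ha,
        zero_comp, zero_comp]
      simp
    · rw [← cancel_mono T.f, Category.assoc, ← biprod.map_snd, ← Category.assoc, ha,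
        zero_comp, zero_comp]
      simp
  have hepi : Epi (biprod.map S.g T.g) := by
    have := hS.epi_g; have := hT.epi_g
    apply Preadditive.epi_of_cancel_zero
    intro Z a ha
    apply biprod.hom_ext'
    · rw [← cancel_epi S.g, ← Category.assoc, ← biprod.inl_map, Category.assoc, ha,
        comp_zero, comp_zero]
      simp
    · rw [← cancel_epi T.g, ← Category.assoc, ← biprod.inr_map, Category.assoc, ha,
        comp_zero, comp_zero]
      simp
  refine ShortComplex.ShortExact.mk' ?_ hmono hepi
  apply ShortComplex.exact_of_f_is_kernel
  apply KernelFork.IsLimit.ofι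
  case lift =>
    intro Z k hk
    have h1 : (k ≫ biprod.fst) ≫ S.g = 0 := by
      rw [Category.assoc, ← biprod.map_fst S.g T.g, ← Category.assoc, hk, zero_comp]
    have h2 : (k ≫ biprod.snd) ≫ T.g = 0 := by
      rw [Category.assoc, ← biprod.map_snd S.g T.g, ← Category.assoc, hk, zero_comp]
    exact biprod.lift (KernelFork.IsLimit.lift' hS.fIsKernel _ h1).1
      (KernelFork.IsLimit.lift' hT.fIsKernel _ h2).1
  case fac =>
    intro Z k hk
    apply biprod.hom_ext
    · simpa using (KernelFork.IsLimit.lift' hS.fIsKernel _ _).2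
    · simpa using (KernelFork.IsLimit.lift' hT.fIsKernel _ _).2
  case uniq =>
    intro Z k hk m hm
    rw [← cancel_mono (biprod.map S.f T.f)]
    apply biprod.hom_ext
    · simpa using (congrArg (· ≫ biprod.fst) hm).trans
        (by simpa using ((KernelFork.IsLimit.lift' hS.fIsKernel _ _).2).symm)
    · simpa using (congrArg (· ≫ biprod.snd) hm).trans
        (by simpa using ((KernelFork.IsLimit.lift' hT.fIsKernel _ _).2).symm)

end SESLemmas

section SESMore

/-- Finite biproduct of short exact sequences is short exact. -/
lemma shortExact_biproduct {n : ℕ} (S : Fin n → ShortComplex A)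
    (hS : ∀ i, (S i).ShortExact) :
    (ShortComplex.mk (biproduct.map fun i => (S i).f) (biproduct.map fun i => (S i).g)
      (by ext i; simp [(S i).zero])).ShortExact := by
  have hmono : Mono (biproduct.map fun i => (S i).f) := by
    have := fun i => (hS i).mono_f
    apply Preadditive.mono_of_cancel_zero
    intro Z a ha
    apply biproduct.hom_ext
    intro j
    rw [← cancel_mono ((S j).f), Category.assoc, ← biproduct.map_π (fun i => (S i).f) j,
      ← Category.assoc, ha, zero_comp, zero_comp]
    simp
  have hepi : Epi (biproduct.map fun i => (S i).g) := by
    have := fun i => (hS i).epi_g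
    apply Preadditive.epi_of_cancel_zero
    intro Z a ha
    apply biproduct.hom_ext'
    intro j
    rw [← cancel_epi ((S j).g), ← Category.assoc, ← biproduct.ι_map (fun i => (S i).g) j,
      Category.assoc, ha, comp_zero, comp_zero]
    simp
  refine ShortComplex.ShortExact.mk' ?_ hmono hepi
  apply ShortComplex.exact_of_f_is_kernel
  apply KernelFork.IsLimit.ofι
  case lift =>
    intro Z k hk
    refine biproduct.lift fun j => (KernelFork.IsLimit.lift' (hS j).fIsKernel
      (k ≫ biproduct.π _ j) ?_).1
    rw [Category.assoc, ← biproduct.map_π (fun i => (S i).g) j, ← Category.assoc, hk,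
      zero_comp]
  case fac =>
    intro Z k hk
    apply biproduct.hom_ext
    intro j
    simpa using (KernelFork.IsLimit.lift' (hS j).fIsKernel _ _).2
  case uniq =>
    intro Z k hk m hm
    rw [← cancel_mono (biproduct.map fun i => (S i).f)]
    apply biproduct.hom_ext
    intro j
    simpa using (congrArg (· ≫ biproduct.π _ j) hm).trans
      (by simpa using ((KernelFork.IsLimit.lift' (hS j).fIsKernel _ _).2).symm)

end SESMore

section Noether

open CategoryTheory.Abelian
open scoped Pseudoelement

/-- Noether: given `0 → X₁ → X₂ → X₃ → 0` and `0 → A₁ → X₁ → A₂ → 0`, there is `Q` with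
`0 → A₁ → X₂ → Q → 0` and `0 → A₂ → Q → X₃ → 0`. -/
lemma noether_quot {X₁ X₂ X₃ A₁ A₂ : A} (f : X₁ ⟶ X₂) (g : X₂ ⟶ X₃) (w : f ≫ g = 0)
    (hS : (ShortComplex.mk f g w).ShortExact)
    (i : A₁ ⟶ X₁) (p : X₁ ⟶ A₂) (w' : i ≫ p = 0)
    (hT : (ShortComplex.mk i p w').ShortExact) :
    ∃ (Q : A) (π : X₂ ⟶ Q) (v : A₂ ⟶ Q) (u : Q ⟶ X₃) (w₁ : (i ≫ f) ≫ π = 0)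
      (w₂ : v ≫ u = 0),
      (ShortComplex.mk (i ≫ f) π w₁).ShortExact ∧ (ShortComplex.mk v u w₂).ShortExact := by
  have hmf : Mono f := hS.mono_f
  have hmi : Mono i := hT.mono_f
  have heg : Epi g := hS.epi_g
  have hep : Epi p := hT.epi_g
  have hmk : Mono (i ≫ f) := mono_comp _ _
  have hkg : (i ≫ f) ≫ g = 0 := by rw [Category.assoc, w, comp_zero]
  obtain ⟨v, hv⟩ := CokernelCofork.IsColimit.desc' hT.gIsCokernel
    (f ≫ cokernel.π (i ≫ f)) (by rw [← Category.assoc]; exact cokernel.condition _)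
  dsimp at hv
  set u : cokernel (i ≫ f) ⟶ X₃ := cokernel.desc (i ≫ f) g hkg with hu
  have hπu : cokernel.π (i ≫ f) ≫ u = g := cokernel.π_desc _ _ _
  have hSES1 : (ShortComplex.mk (i ≫ f) (cokernel.π (i ≫ f))
      (cokernel.condition _)).ShortExact := by
    refine ShortComplex.ShortExact.mk' ?_ hmk inferInstance
    exact ShortComplex.exact_of_g_is_cokernel _ (cokernelIsCokernel _)
  have hvu : v ≫ u = 0 := by
    rw [← cancel_epi p, ← Category.assoc, hv, Category.assoc, hπu, w, comp_zero]
  refine ⟨cokernel (i ≫ f), cokernel.π _, v, u, cokernel.condition _, hvu, hSES1, ?_⟩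
  have hepu : Epi u := epi_of_epi_fac hπu
  have hmv : Mono v := by
    apply Pseudoelement.mono_of_zero_of_map_zero
    intro a ha
    obtain ⟨a', rfl⟩ := Pseudoelement.pseudo_surjective_of_epi p a
    rw [← Pseudoelement.comp_apply, hv, Pseudoelement.comp_apply] at ha
    obtain ⟨a₁, ha₁⟩ := Pseudoelement.pseudo_exact_of_exact hSES1.exact (f a') ha
    rw [Pseudoelement.comp_apply] at ha₁
    have h2 : i a₁ = a' := Pseudoelement.pseudo_injective_of_mono f ha₁
    rw [← h2, ← Pseudoelement.comp_apply, w', Pseudoelement.zero_apply]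
  refine ShortComplex.ShortExact.mk' ?_ hmv hepu
  apply Pseudoelement.exact_of_pseudo_exact
  intro b hb
  obtain ⟨b', rfl⟩ := Pseudoelement.pseudo_surjective_of_epi (cokernel.π (i ≫ f)) b
  rw [← Pseudoelement.comp_apply, hπu] at hb
  obtain ⟨a, ha⟩ := Pseudoelement.pseudo_exact_of_exact hS.exact b' hb
  refine ⟨p a, ?_⟩
  rw [← Pseudoelement.comp_apply, hv, Pseudoelement.comp_apply, ha]

/-- Noether (dual): given `0 → X₁ → X₂ → X₃ → 0` and `0 → C₁ → X₃ → C₂ → 0`, there is `K` with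
`0 → K → X₂ → C₂ → 0` and `0 → X₁ → K → C₁ → 0`. -/
lemma noether_sub {X₁ X₂ X₃ C₁ C₂ : A} (f : X₁ ⟶ X₂) (g : X₂ ⟶ X₃) (w : f ≫ g = 0)
    (hS : (ShortComplex.mk f g w).ShortExact)
    (j : C₁ ⟶ X₃) (q : X₃ ⟶ C₂) (w' : j ≫ q = 0)
    (hT : (ShortComplex.mk j q w').ShortExact) :
    ∃ (K : A) (ι : K ⟶ X₂) (w0 : X₁ ⟶ K) (t : K ⟶ C₁) (w₁ : ι ≫ (g ≫ q) = 0)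
      (w₂ : w0 ≫ t = 0),
      (ShortComplex.mk ι (g ≫ q) w₁).ShortExact ∧ (ShortComplex.mk w0 t w₂).ShortExact := by
  have hmf : Mono f := hS.mono_f
  have hmj : Mono j := hT.mono_f
  have heg : Epi g := hS.epi_g
  have heq : Epi q := hT.epi_g
  have hegq : Epi (g ≫ q) := epi_comp _ _
  have hfgq : f ≫ g ≫ q = 0 := by rw [← Category.assoc, w, zero_comp]
  set w0 : X₁ ⟶ kernel (g ≫ q) := kernel.lift (g ≫ q) f hfgq with hw0
  have hw0ι : w0 ≫ kernel.ι (g ≫ q) = f := kernel.lift_ι _ _ _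
  obtain ⟨t, ht⟩ := KernelFork.IsLimit.lift' hT.fIsKernel (kernel.ι (g ≫ q) ≫ g)
    (by rw [Category.assoc]; exact kernel.condition _)
  dsimp at ht
  have hSES1 : (ShortComplex.mk (kernel.ι (g ≫ q)) (g ≫ q)
      (kernel.condition _)).ShortExact := by
    refine ShortComplex.ShortExact.mk' ?_ inferInstance hegq
    exact ShortComplex.exact_of_f_is_kernel _ (kernelIsKernel _)
  have hw0t : w0 ≫ t = 0 := by
    rw [← cancel_mono j, Category.assoc, ht, ← Category.assoc, hw0ι, w, zero_comp]
  refine ⟨kernel (g ≫ q), kernel.ι _, w0, t, kernel.condition _, hw0t, hSES1, ?_⟩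
  have hmw0 : Mono w0 := by
    have : Mono (w0 ≫ kernel.ι (g ≫ q)) := by rw [hw0ι]; exact hmf
    exact mono_of_mono w0 (kernel.ι (g ≫ q))
  have het : Epi t := by
    apply Pseudoelement.epi_of_pseudo_surjective
    intro c₁
    obtain ⟨b, hb⟩ := Pseudoelement.pseudo_surjective_of_epi g (j c₁)
    have hbq : (g ≫ q) b = 0 := by
      rw [Pseudoelement.comp_apply, hb, ← Pseudoelement.comp_apply, w',
        Pseudoelement.zero_apply]
    obtain ⟨x, hx⟩ := Pseudoelement.pseudo_exact_of_exact hSES1.exact b hbq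
    refine ⟨x, Pseudoelement.pseudo_injective_of_mono j ?_⟩
    rw [← Pseudoelement.comp_apply, ht, Pseudoelement.comp_apply, hx, hb]
  refine ShortComplex.ShortExact.mk' ?_ hmw0 het
  apply Pseudoelement.exact_of_pseudo_exact
  intro x hx
  have hgι : g (kernel.ι (g ≫ q) x) = 0 := by
    rw [← Pseudoelement.comp_apply, ← ht, Pseudoelement.comp_apply, hx,
      Pseudoelement.apply_zero]
  obtain ⟨a, ha⟩ := Pseudoelement.pseudo_exact_of_exact hS.exact (kernel.ι (g ≫ q) x) hgι
  refine ⟨a, Pseudoelement.pseudo_injective_of_mono (kernel.ι (g ≫ q)) ?_⟩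
  rw [← Pseudoelement.comp_apply, hw0ι, ha]

end Noether

/-- The diamond operator on subcategories (closed under isomorphisms, finite direct
sums and direct summands) of an abelian category is associative. -/
theorem diamond_assoc (U V W : Set A)
    (hU : addClosure U = U) (hV : addClosure V = V) (hW : addClosure W = W) :
    diamondSet (diamondSet U V) W = diamondSet U (diamondSet V W) := by
  apply Set.Subset.antisymm
  · rintro X ⟨n, g, Y, hg, ⟨φ⟩⟩
    choose Sg hSg h2 h1 h3 using hg
    have hgfun : (fun i => (Sg i).X₂) = g := funext h2
    rw [← hgfun] at φ
    have hB := shortExact_biproduct Sg hSg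
    have hM : (⨁ fun i => (Sg i).X₁) ∈ diamondSet U V :=
      biproduct_mem_addClosure _ h1
    obtain ⟨m, E, N, hE, ⟨ψ⟩⟩ := hM
    choose SE hSE e2 e1 e3 using hE
    have hEfun : (fun j => (SE j).X₂) = E := funext e2
    rw [← hEfun] at ψ
    have hEE := shortExact_biproduct SE hSE
    have hUst : (⨁ fun j => (SE j).X₁) ∈ U :=
      hU ▸ biproduct_mem_addClosure _ fun j => mem_addClosure_of_mem (e1 j)
    have hVst : (⨁ fun j => (SE j).X₃) ∈ V :=
      hV ▸ biproduct_mem_addClosure _ fun j => mem_addClosure_of_mem (e3 j)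
    have hBN := shortExact_binaryBiprod hB (shortExact_id_zero N)
    have hT := shortExact_X₂iso hEE ψ.symm
    obtain ⟨Q, π, v, u, w₁, w₂, hQ1, hQ2⟩ := noether_quot _ _ _ hBN _ _ _ hT
    have hQmem : Q ∈ diamondSet V W := by
      apply mem_addClosure_of_mem
      refine ⟨_, hQ2, rfl, hVst, ?_⟩
      rw [← hW]
      exact biprod_mem_addClosure
        (biproduct_mem_addClosure _ fun i => mem_addClosure_of_mem (h3 i))
        (zero_mem_addClosure W)
    have hBNmem : ((⨁ fun i => (Sg i).X₂) ⊞ N) ∈ diamondSet U (diamondSet V W) :=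
      mem_addClosure_of_mem ⟨_, hQ1, rfl, hUst, hQmem⟩
    exact mem_addClosure_of_summand
      ((biprod.associator X Y N).symm ≪≫ biprod.mapIso φ (Iso.refl N)) hBNmem
  · rintro X ⟨n, g, Y, hg, ⟨φ⟩⟩
    choose Sg hSg h2 h1 h3 using hg
    have hgfun : (fun i => (Sg i).X₂) = g := funext h2
    rw [← hgfun] at φ
    have hB := shortExact_biproduct Sg hSg
    have hM : (⨁ fun i => (Sg i).X₃) ∈ diamondSet V W :=
      biproduct_mem_addClosure _ h3
    obtain ⟨m, E, N, hE, ⟨ψ⟩⟩ := hM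
    choose SE hSE e2 e1 e3 using hE
    have hEfun : (fun j => (SE j).X₂) = E := funext e2
    rw [← hEfun] at ψ
    have hEE := shortExact_biproduct SE hSE
    have hUst := hU ▸ biprod_mem_addClosure
      (biproduct_mem_addClosure (fun i => (Sg i).X₁) fun i => mem_addClosure_of_mem (h1 i))
      (zero_mem_addClosure U)
    have hVst : (⨁ fun j => (SE j).X₁) ∈ V :=
      hV ▸ biproduct_mem_addClosure _ fun j => mem_addClosure_of_mem (e1 j)
    have hWst : (⨁ fun j => (SE j).X₃) ∈ W :=
      hW ▸ biproduct_mem_addClosure _ fun j => mem_addClosure_of_mem (e3 j)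
    have hBN := shortExact_binaryBiprod hB (shortExact_zero_id N)
    have hS' := shortExact_X₃iso hBN ψ
    obtain ⟨K, ι, w0, t, w₁, w₂, hK1, hK2⟩ := noether_sub _ _ _ hS' _ _ _ hEE
    have hKmem : K ∈ diamondSet U V :=
      mem_addClosure_of_mem ⟨_, hK2, rfl, hUst, hVst⟩
    have hBNmem : ((⨁ fun i => (Sg i).X₂) ⊞ N) ∈ diamondSet (diamondSet U V) W :=
      mem_addClosure_of_mem ⟨_, hK1, rfl, hKmem, hWst⟩
    exact mem_addClosure_of_summand
      ((biprod.associator X Y N).symm ≪≫ biprod.mapIso φ (Iso.refl N)) hBNmem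
end

section
/- Let A be an abelian category with enough projectives and injectives admitting an additive generating object. Then the extension dimension of A is at most the representation dimension of A minus two: dim A ≤ repdim A − 2. -/
open CategoryTheory CategoryTheory.Limits

attribute [local instance] CategoryTheory.Abelian.hasFiniteBiproducts

universe v u

variable {A : Type u} [Category.{v} A] [Abelian A]

/-- The weak `M`-resolution dimension of an object `X`. -/
noncomputable def wResDim (M X : A) : ℕ∞ :=
  sInf {n : ℕ∞ | ∃ i : ℕ, (i : ℕ∞) = n ∧ ClassRes (addClosure {M}) i X}

/-- The weak resolution dimension of an abelian category. -/
noncomputable def wResolDim (A : Type u) [Category.{v} A] [Abelian A] : ℕ∞ :=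
  ⨅ M : A, ⨆ X : A, wResDim M X

/-- `A` admits an additive generating object. -/
def HasAddGenerator (A : Type u) [Category.{v} A] [Abelian A] : Prop :=
  ∃ G : A, ∀ X : A, ∃ G' ∈ addClosure ({G} : Set A), ∃ f : G' ⟶ X, Epi f

/-- `ResHomExact M n X` : there is a `Hom(add M, -)`-exact exact sequence
`0 → M_n → ⋯ → M₀ → X → 0` with all `Mᵢ ∈ add M`. -/
def ResHomExact (M : A) : ℕ → A → Prop
  | 0, X => X ∈ addClosure {M}
  | n + 1, X => ∃ S : ShortComplex A,
      S.ShortExact ∧ S.X₃ = X ∧ S.X₂ ∈ addClosure {M} ∧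
      (∀ N ∈ addClosure ({M} : Set A), ∀ h : N ⟶ S.X₃, ∃ h' : N ⟶ S.X₂, h' ≫ S.g = h) ∧
      ResHomExact M n S.X₁

/-- `CoresHomExact M n X` : there is a `Hom(-, add M)`-exact exact sequence
`0 → X → N₀ → ⋯ → N_n → 0` with all `Nᵢ ∈ add M`. -/
def CoresHomExact (M : A) : ℕ → A → Prop
  | 0, X => X ∈ addClosure {M}
  | n + 1, X => ∃ S : ShortComplex A,
      S.ShortExact ∧ S.X₁ = X ∧ S.X₂ ∈ addClosure {M} ∧
      (∀ N ∈ addClosure ({M} : Set A), ∀ h : S.X₁ ⟶ N, ∃ h' : S.X₂ ⟶ N, S.f ≫ h' = h) ∧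
      CoresHomExact M n S.X₃

/-- The representation dimension of an abelian category (Auslander). -/
noncomputable def repDim (A : Type u) [Category.{v} A] [Abelian A] : ℕ∞ :=
  sInf {n : ℕ∞ | ∃ i : ℕ, (i : ℕ∞) = n ∧ 2 ≤ i ∧
    ∃ M : A, ∀ X : A, ResHomExact M (i - 2) X ∧ CoresHomExact M (i - 2) X}

namespace ExtRepAux
open ZeroObject
noncomputable section
variable {A : Type u} [Category.{v} A] [Abelian A]

/-- `X ⊞ 0 ≅ X`. -/
def biprodZeroIso (X : A) : X ⊞ (0 : A) ≅ X where
  hom := biprod.fst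
  inv := biprod.lift (𝟙 X) 0
  hom_inv_id := by
    apply biprod.hom_ext
    · simp
    · apply (isZero_zero A).eq_of_tgt
  inv_hom_id := by simp

/-- shuffle -/
def shuffleIso (W X Y Z : A) : (W ⊞ X) ⊞ (Y ⊞ Z) ≅ (W ⊞ Y) ⊞ (X ⊞ Z) where
  hom := biprod.lift (biprod.lift (biprod.fst ≫ biprod.fst) (biprod.snd ≫ biprod.fst))
    (biprod.lift (biprod.fst ≫ biprod.snd) (biprod.snd ≫ biprod.snd))
  inv := biprod.lift (biprod.lift (biprod.fst ≫ biprod.fst) (biprod.snd ≫ biprod.fst))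
    (biprod.lift (biprod.fst ≫ biprod.snd) (biprod.snd ≫ biprod.snd))
  hom_inv_id := by apply biprod.hom_ext <;> apply biprod.hom_ext <;> simp
  inv_hom_id := by apply biprod.hom_ext <;> apply biprod.hom_ext <;> simp

lemma isZero_biproduct_empty (f : Fin 0 → A) : IsZero (⨁ f) := by
  rw [IsZero.iff_id_eq_zero]
  apply biproduct.hom_ext
  intro j; exact absurd j.2 (by omega)

/-- peel off the 0-th term of a `Fin (n+1)`-indexed biproduct -/
def biproductPeelIso {n : ℕ} (f : Fin (n+1) → A) :
    (⨁ f) ≅ f 0 ⊞ ⨁ (fun i : Fin n => f i.succ) where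
  hom := biprod.lift (biproduct.π f 0) (biproduct.lift fun i => biproduct.π f i.succ)
  inv := biprod.desc (biproduct.ι f 0) (biproduct.desc fun i => biproduct.ι f i.succ)
  hom_inv_id := by
    rw [biprod.lift_desc, biproduct.lift_desc, ← biproduct.total, Fin.sum_univ_succ]
  inv_hom_id := by
    apply biprod.hom_ext'
    · apply biprod.hom_ext <;> simp [biproduct.ι_π]
      · apply biproduct.hom_ext
        intro j
        simp [biproduct.ι_π_ne _ (Fin.succ_ne_zero j).symm]
    · apply biprod.hom_ext
      · apply biproduct.hom_ext'
        intro j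
        simp [biproduct.ι_π_ne _ (Fin.succ_ne_zero j)]
      · apply biproduct.hom_ext'
        intro j
        apply biproduct.hom_ext
        intro k
        by_cases h : j = k
        · subst h; simp [biproduct.ι_π_self]
        · simp [biproduct.ι_π_ne _ h, biproduct.ι_π_ne _ (fun hh => h (Fin.succ_inj.mp hh))]

/-- iterated binary power -/
def pow (T : A) : ℕ → A
  | 0 => 0
  | n + 1 => T ⊞ pow T n

/-- `pow T n` agrees with the `Fin n`-indexed biproduct of copies of `T`. -/
def powIso (T : A) : (n : ℕ) → (pow T n ≅ ⨁ (fun _ : Fin n => T))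
  | 0 => (isZero_zero A).iso (isZero_biproduct_empty _)
  | n + 1 =>
      (biprod.mapIso (Iso.refl T) (powIso T n)).trans (biproductPeelIso fun _ : Fin (n+1) => T).symm

lemma pow_add_iso (T : A) (n m : ℕ) : Nonempty (pow T (n + m) ≅ pow T n ⊞ pow T m) := by
  induction m with
  | zero => exact ⟨(biprodZeroIso (pow T n)).symm⟩
  | succ m ih =>
      obtain ⟨e⟩ := ih
      refine ⟨((biprod.mapIso (Iso.refl T) e).trans ?_ : pow T (n + (m+1)) ≅ _)⟩
      exact (biprod.associator T (pow T n) (pow T m)).symm.trans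
        ((biprod.mapIso (biprod.braiding T (pow T n)) (Iso.refl (pow T m))).trans
          (biprod.associator (pow T n) T (pow T m)))

/-! ### summands and `addClosure` -/

/-- `X` is a direct summand of `W`. -/
def Smd (X W : A) : Prop := ∃ Y : A, Nonempty (X ⊞ Y ≅ W)

lemma Smd.of_iso {X W : A} (e : X ≅ W) : Smd X W :=
  ⟨0, ⟨(biprodZeroIso X).trans e⟩⟩

lemma Smd.refl (X : A) : Smd X X := Smd.of_iso (Iso.refl X)

lemma Smd.iso_right {X W W' : A} (h : Smd X W) (e : W ≅ W') : Smd X W' := by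
  obtain ⟨Y, ⟨e'⟩⟩ := h; exact ⟨Y, ⟨e'.trans e⟩⟩

lemma Smd.iso_left {X X' W : A} (e : X' ≅ X) (h : Smd X W) : Smd X' W := by
  obtain ⟨Y, ⟨e'⟩⟩ := h; exact ⟨Y, ⟨(biprod.mapIso e (Iso.refl Y)).trans e'⟩⟩

lemma Smd.trans {X W V : A} (h : Smd X W) (h' : Smd W V) : Smd X V := by
  obtain ⟨Y, ⟨e⟩⟩ := h; obtain ⟨Z, ⟨e'⟩⟩ := h'
  exact ⟨Y ⊞ Z, ⟨(biprod.associator X Y Z).symm.trans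
    ((biprod.mapIso e (Iso.refl Z)).trans e')⟩⟩

lemma Smd.add {X W X' W' : A} (h : Smd X W) (h' : Smd X' W') :
    Smd (X ⊞ X') (W ⊞ W') := by
  obtain ⟨Y, ⟨e⟩⟩ := h; obtain ⟨Y', ⟨e'⟩⟩ := h'
  exact ⟨Y ⊞ Y', ⟨(shuffleIso X X' Y Y').trans (biprod.mapIso e e')⟩⟩

lemma Smd.left (X W : A) : Smd X (X ⊞ W) := ⟨W, ⟨Iso.refl _⟩⟩

lemma mem_addClosure_singleton_iff {T X : A} :
    X ∈ addClosure ({T} : Set A) ↔ ∃ n : ℕ, Smd X (pow T n) := by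
  constructor
  · rintro ⟨n, f, Y, hf, ⟨e⟩⟩
    have hfe : f = fun _ => T := funext fun i => hf i
    subst hfe
    exact ⟨n, Y, ⟨e.trans (powIso T n).symm⟩⟩
  · rintro ⟨n, Y, ⟨e⟩⟩
    exact ⟨n, fun _ => T, Y, fun _ => rfl, ⟨e.trans (powIso T n)⟩⟩

lemma mem_addClosure_of_isZero {T X : A} (h : IsZero X) : X ∈ addClosure ({T} : Set A) :=
  mem_addClosure_singleton_iff.2 ⟨0, Smd.of_iso (h.iso (isZero_zero A))⟩

lemma self_mem_addClosure (T : A) : T ∈ addClosure ({T} : Set A) :=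
  mem_addClosure_singleton_iff.2 ⟨1, Smd.of_iso (biprodZeroIso T).symm⟩

lemma mem_addClosure_of_iso {T X X' : A} (e : X' ≅ X) (h : X ∈ addClosure ({T} : Set A)) :
    X' ∈ addClosure ({T} : Set A) := by
  obtain ⟨n, hn⟩ := mem_addClosure_singleton_iff.1 h
  exact mem_addClosure_singleton_iff.2 ⟨n, hn.iso_left e⟩

lemma addClosure_mem_biprod {T X X' : A} (h : X ∈ addClosure ({T} : Set A))
    (h' : X' ∈ addClosure ({T} : Set A)) : (X ⊞ X') ∈ addClosure ({T} : Set A) := by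
  obtain ⟨n, hn⟩ := mem_addClosure_singleton_iff.1 h
  obtain ⟨m, hm⟩ := mem_addClosure_singleton_iff.1 h'
  obtain ⟨e⟩ := pow_add_iso T n m
  exact mem_addClosure_singleton_iff.2 ⟨n + m, (hn.add hm).iso_right e.symm⟩

lemma summand_mem_addClosure {T X W : A} (h : Smd X W) (hW : W ∈ addClosure ({T} : Set A)) :
    X ∈ addClosure ({T} : Set A) := by
  obtain ⟨n, hn⟩ := mem_addClosure_singleton_iff.1 hW
  exact mem_addClosure_singleton_iff.2 ⟨n, h.trans hn⟩

lemma smd_pow_pow {T T' : A} (r : ℕ) (h : Smd T' (pow T r)) :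
    ∀ n : ℕ, Smd (pow T' n) (pow T (r * n))
  | 0 => Smd.refl _
  | n + 1 => by
      have := (h.add (smd_pow_pow r h n))
      obtain ⟨e⟩ := pow_add_iso T r (r * n)
      exact (this.iso_right e.symm).iso_right
        (by rw [show r + r * n = r * (n+1) by ring])

/-- transfer membership along a summand relation on generators -/
lemma addClosure_trans {T T' X : A} (r : ℕ) (h : Smd T' (pow T r))
    (hX : X ∈ addClosure ({T'} : Set A)) : X ∈ addClosure ({T} : Set A) := by
  obtain ⟨n, hn⟩ := mem_addClosure_singleton_iff.1 hX
  exact mem_addClosure_singleton_iff.2 ⟨r * n, hn.trans (smd_pow_pow r h n)⟩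

/-! ### short exact sequence toolkit -/

/-- factor a map that is killed by `S.g` through `S.f` -/
lemma sesFactor {S : ShortComplex A} (hS : S.ShortExact) {W : A} (k : W ⟶ S.X₂)
    (hk : k ≫ S.g = 0) : ∃ l : W ⟶ S.X₁, l ≫ S.f = k := by
  obtain ⟨l, hl⟩ := KernelFork.IsLimit.lift' hS.fIsKernel k hk
  exact ⟨l, hl⟩

/-- The short exact sequence `0 → ker f → X → Y → 0` for an epi `f`. -/
lemma kernelSE {X Y : A} (f : X ⟶ Y) [Epi f] :
    (ShortComplex.mk (kernel.ι f) f (kernel.condition f)).ShortExact := by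
  refine ShortComplex.ShortExact.mk' ?_ inferInstance inferInstance
  exact ShortComplex.exact_of_f_is_kernel _ (kernelIsKernel f)

/-- trivial SES `0 → X → X → 0 → 0` -/
lemma idSE₁ (X : A) :
    (ShortComplex.mk (𝟙 X) (0 : X ⟶ (0 : A)) (by simp)).ShortExact := by
  have he : Epi (0 : X ⟶ (0 : A)) := ⟨fun g h _ => (isZero_zero A).eq_of_src g h⟩
  refine ShortComplex.ShortExact.mk' ?_ inferInstance he
  apply ShortComplex.exact_of_f_is_kernel
  exact KernelFork.IsLimit.ofι' _ _ (fun k _ => ⟨k, by simp⟩)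

/-- trivial SES `0 → 0 → X → X → 0` -/
lemma idSE₂ (X : A) :
    (ShortComplex.mk (0 : (0 : A) ⟶ X) (𝟙 X) (by simp)).ShortExact := by
  have hm : Mono (0 : (0 : A) ⟶ X) := ⟨fun g h _ => (isZero_zero A).eq_of_tgt g h⟩
  refine ShortComplex.ShortExact.mk' ?_ hm inferInstance
  apply ShortComplex.exact_of_f_is_kernel
  refine KernelFork.IsLimit.ofι' _ _ (fun k hk => ⟨0, ?_⟩)
  simp only [Category.comp_id] at hk
  simp [hk]

/-- if the third term is zero, the first map is an isomorphism -/
lemma seIsoOfZero₃ {S : ShortComplex A} (hS : S.ShortExact) (h3 : IsZero S.X₃) :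
    IsIso S.f := by
  have hm : Mono S.f := hS.mono_f
  have hg : S.g = 0 := h3.eq_of_tgt _ _
  have : Epi S.f := hS.exact.epi_f hg
  exact isIso_of_mono_of_epi S.f

/-- pull back a SES along any map into the third term -/
lemma pullbackSE (S : ShortComplex A) (hS : S.ShortExact) {E : A} (t : E ⟶ S.X₃) :
    (ShortComplex.mk (pullback.lift S.f 0 (by simp [S.zero]) : S.X₁ ⟶ pullback S.g t)
      (pullback.snd S.g t) (pullback.lift_snd _ _ _)).ShortExact := by
  haveI := hS.epi_g
  haveI := hS.mono_f
  have hc : (pullback.lift S.f 0 (by simp [S.zero]) : S.X₁ ⟶ pullback S.g t) ≫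
      pullback.fst S.g t = S.f := pullback.lift_fst _ _ _
  haveI hm : Mono (pullback.lift S.f 0 (by simp [S.zero]) : S.X₁ ⟶ pullback S.g t) := by
    have : Mono ((pullback.lift S.f 0 (by simp [S.zero]) : S.X₁ ⟶ pullback S.g t) ≫
        pullback.fst S.g t) := by rw [hc]; infer_instance
    exact mono_of_mono _ (pullback.fst S.g t)
  refine ShortComplex.ShortExact.mk' ?_ hm inferInstance
  apply ShortComplex.exact_of_f_is_kernel
  refine KernelFork.IsLimit.ofι' _ _ (fun k hk => ?_)
  have h0 : (k ≫ pullback.fst S.g t) ≫ S.g = 0 := by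
    rw [Category.assoc, pullback.condition, ← Category.assoc, hk, zero_comp]
  refine ⟨(sesFactor hS _ h0).choose, ?_⟩
  have hl := (sesFactor hS _ h0).choose_spec
  apply pullback.hom_ext
  · rw [Category.assoc, pullback.lift_fst]; exact hl
  · rw [Category.assoc, pullback.lift_snd, comp_zero]; exact hk.symm

/-- SES of the composite `N → C → C₂` where `N → C` is epi and `C → C₂` comes from a SES
with first map `a : A' → C`; the kernel is the pullback of the epi along `a`. -/
lemma compositeSE (S : ShortComplex A) (hS : S.ShortExact) {N : A} (p : N ⟶ S.X₂) [Epi p] :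
    (ShortComplex.mk (pullback.fst p S.f) (p ≫ S.g)
      (by rw [← Category.assoc, pullback.condition, Category.assoc, S.zero, comp_zero])).ShortExact := by
  haveI := hS.mono_f
  haveI := hS.epi_g
  refine ShortComplex.ShortExact.mk' ?_ inferInstance ?_
  · apply ShortComplex.exact_of_f_is_kernel
    refine KernelFork.IsLimit.ofι' _ _ (fun k hk => ?_)
    have hk' : (k ≫ p) ≫ S.g = 0 := by simpa using hk
    refine ⟨pullback.lift k (sesFactor hS _ hk').choose
      ((sesFactor hS _ hk').choose_spec).symm, pullback.lift_fst _ _ _⟩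
  · exact epi_comp _ _

/-- binary biproduct of two SESs -/
lemma biprodSE (S S' : ShortComplex A) (hS : S.ShortExact) (hS' : S'.ShortExact) :
    (ShortComplex.mk (biprod.map S.f S'.f) (biprod.map S.g S'.g)
      (by ext <;> simp [S.zero, S'.zero])).ShortExact := by
  haveI := hS.mono_f; haveI := hS'.mono_f; haveI := hS.epi_g; haveI := hS'.epi_g
  have hm : Mono (biprod.map S.f S'.f) := by
    constructor
    intro W u v huv
    apply biprod.hom_ext
    · rw [← cancel_mono S.f]
      simpa using congrArg (fun q => q ≫ biprod.fst) huv
    · rw [← cancel_mono S'.f]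
      simpa using congrArg (fun q => q ≫ biprod.snd) huv
  have he : Epi (biprod.map S.g S'.g) := by
    constructor
    intro W u v huv
    apply biprod.hom_ext'
    · rw [← cancel_epi S.g]
      simpa using congrArg (fun q => biprod.inl ≫ q) huv
    · rw [← cancel_epi S'.g]
      simpa using congrArg (fun q => biprod.inr ≫ q) huv
  refine ShortComplex.ShortExact.mk' ?_ hm he
  apply ShortComplex.exact_of_f_is_kernel
  refine KernelFork.IsLimit.ofι' _ _ (fun k hk => ?_)
  have h1 : (k ≫ biprod.fst) ≫ S.g = 0 := by
    have := congrArg (fun q => q ≫ biprod.fst) hk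
    simpa using this
  have h2 : (k ≫ biprod.snd) ≫ S'.g = 0 := by
    have := congrArg (fun q => q ≫ biprod.snd) hk
    simpa using this
  refine ⟨biprod.lift (sesFactor hS _ h1).choose (sesFactor hS' _ h2).choose, ?_⟩
  have hw1 := (sesFactor hS _ h1).choose_spec
  have hw2 := (sesFactor hS' _ h2).choose_spec
  apply biprod.hom_ext <;> simp [hw1, hw2]

/-- extend the quotient of a SES by a biproduct summand, then compose with an iso -/
lemma inflateSE (S : ShortComplex A) (hS : S.ShortExact) (C' R : A) (σ : S.X₃ ⊞ C' ≅ R) :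
    (ShortComplex.mk (S.f ≫ biprod.inl) (biprod.map S.g (𝟙 C') ≫ σ.hom)
      (by rw [Category.assoc, ← Category.assoc (biprod.inl), biprod.inl_map, ← Category.assoc,
        ← Category.assoc, S.zero, zero_comp, zero_comp])).ShortExact := by
  haveI := hS.mono_f
  haveI := hS.epi_g
  have hm : Mono (S.f ≫ (biprod.inl : S.X₂ ⟶ S.X₂ ⊞ C')) := mono_comp _ _
  have he' : Epi (biprod.map S.g (𝟙 C')) := by
    constructor
    intro W u v huv
    apply biprod.hom_ext'
    · rw [← cancel_epi S.g]
      simpa using congrArg (fun q => biprod.inl ≫ q) huv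
    · simpa using congrArg (fun q => biprod.inr ≫ q) huv
  have he : Epi (biprod.map S.g (𝟙 C') ≫ σ.hom) := epi_comp _ _
  refine ShortComplex.ShortExact.mk' ?_ hm he
  apply ShortComplex.exact_of_f_is_kernel
  refine KernelFork.IsLimit.ofι' _ _ (fun k hk => ?_)
  have hk' : k ≫ biprod.map S.g (𝟙 C') = 0 := by
    have h := hk
    rw [show (ShortComplex.mk (S.f ≫ biprod.inl) (biprod.map S.g (𝟙 C') ≫ σ.hom)
      (by rw [Category.assoc, ← Category.assoc (biprod.inl), biprod.inl_map, ← Category.assoc,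
        ← Category.assoc, S.zero, zero_comp, zero_comp])).g = biprod.map S.g (𝟙 C') ≫ σ.hom
      from rfl] at h
    exact (cancel_mono σ.hom).1 (by rw [Category.assoc, h]; simp)
  have h1 : (k ≫ biprod.fst) ≫ S.g = 0 := by
    have := congrArg (fun q => q ≫ biprod.fst) hk'
    simpa using this
  have h2 : k ≫ biprod.snd = 0 := by
    have := congrArg (fun q => q ≫ biprod.snd) hk'
    simpa using this
  refine ⟨(sesFactor hS _ h1).choose, ?_⟩
  have hw := (sesFactor hS _ h1).choose_spec
  apply biprod.hom_ext
  · simp [hw]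
  · simp [h2]

/-- a SES whose epi admits a section splits: the middle is a biproduct -/
lemma splitSE {S : ShortComplex A} (hS : S.ShortExact) (s : S.X₃ ⟶ S.X₂)
    (hs : s ≫ S.g = 𝟙 S.X₃) : Nonempty (S.X₂ ≅ S.X₁ ⊞ S.X₃) := by
  haveI := hS.mono_f
  have hzero : (𝟙 S.X₂ - S.g ≫ s) ≫ S.g = 0 := by
    rw [Preadditive.sub_comp, Category.id_comp, Category.assoc, hs, Category.comp_id, sub_self]
  obtain ⟨r, hr⟩ := sesFactor hS _ hzero
  refine ⟨{ hom := biprod.lift r S.g, inv := biprod.desc S.f s, hom_inv_id := ?_, inv_hom_id := ?_ }⟩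
  · rw [biprod.lift_desc, hr]
    simp
  · apply biprod.hom_ext'
    · apply biprod.hom_ext
      · have : (S.f ≫ r) ≫ S.f = S.f := by
          rw [Category.assoc, hr, Preadditive.comp_sub, Category.comp_id, ← Category.assoc,
            S.zero, zero_comp, sub_zero]
        rw [← cancel_mono S.f]
        simpa using this
      · simp [S.zero]
    · apply biprod.hom_ext
      · have : (s ≫ r) ≫ S.f = 0 := by
          rw [Category.assoc, hr, Preadditive.comp_sub, Category.comp_id, ← Category.assoc,
            hs, Category.id_comp, sub_self]
        rw [← cancel_mono S.f]
        simpa using this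
      · simp [hs]

/-! ### the tower of syzygies -/

section Tower
variable [EnoughProjectives A]

/-- iterated (chosen) syzygies of `M` -/
def Omg (M : A) : ℕ → A
  | 0 => M
  | j + 1 => kernel (Projective.π (Omg M j))

/-- the `g`-th tower object: direct sum of the syzygies `Ω^j M` for `j ≤ g` together with
their chosen projective covers -/
def TObj (M : A) : ℕ → A
  | 0 => M ⊞ Projective.over M
  | g + 1 => (Omg M (g + 1) ⊞ Projective.over (Omg M (g + 1))) ⊞ TObj M g

lemma Smd.right (X W : A) : Smd X (W ⊞ X) := ⟨W, ⟨biprod.braiding X W⟩⟩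

lemma smd_TObj_succ (M : A) (g : ℕ) : Smd (TObj M g) (TObj M (g + 1)) := Smd.right _ _

lemma smd_TObj_le (M : A) {g g' : ℕ} (h : g ≤ g') : Smd (TObj M g) (TObj M g') := by
  induction g' with
  | zero => cases Nat.le_zero.1 h; exact Smd.refl _
  | succ g' ih =>
      rcases Nat.lt_or_ge g (g' + 1) with hlt | hge
      · exact (ih (Nat.lt_succ_iff.1 hlt)).trans (smd_TObj_succ M g')
      · cases Nat.le_antisymm h hge; exact Smd.refl _

lemma gmono (M : A) {g g' : ℕ} (h : g ≤ g') {Z : A}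
    (hZ : Z ∈ addClosure ({TObj M g} : Set A)) : Z ∈ addClosure ({TObj M g'} : Set A) :=
  addClosure_trans 1 ((smd_TObj_le M h).iso_right (biprodZeroIso _).symm) hZ

lemma smd_B_TObj (M : A) {g j : ℕ} (h : j ≤ g) :
    Smd (Omg M j ⊞ Projective.over (Omg M j)) (TObj M g) := by
  induction g with
  | zero => cases Nat.le_zero.1 h; exact Smd.refl _
  | succ g ih =>
      rcases Nat.lt_or_ge j (g + 1) with hlt | hge
      · exact (ih (Nat.lt_succ_iff.1 hlt)).trans (smd_TObj_succ M g)
      · cases Nat.le_antisymm h hge; exact Smd.left _ _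

lemma omg_mem (M : A) {g j : ℕ} (h : j ≤ g) :
    Omg M j ∈ addClosure ({TObj M g} : Set A) :=
  mem_addClosure_singleton_iff.2 ⟨1,
    ((Smd.left (Omg M j) (Projective.over (Omg M j))).trans (smd_B_TObj M h)).iso_right
      (biprodZeroIso _).symm⟩

lemma pover_mem (M : A) {g j : ℕ} (h : j ≤ g) :
    Projective.over (Omg M j) ∈ addClosure ({TObj M g} : Set A) :=
  mem_addClosure_singleton_iff.2 ⟨1,
    ((Smd.right (Projective.over (Omg M j)) (Omg M j)).trans (smd_B_TObj M h)).iso_right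
      (biprodZeroIso _).symm⟩

lemma tobj_mem (M : A) (g : ℕ) : TObj M g ∈ addClosure ({TObj M g} : Set A) :=
  self_mem_addClosure _

lemma pow_tobj_mem (M : A) (g n : ℕ) :
    pow (TObj M g) n ∈ addClosure ({TObj M g} : Set A) :=
  mem_addClosure_singleton_iff.2 ⟨n, Smd.refl _⟩

/-- the cover SES of `TObj M g`: a projective mapping onto it whose kernel lies one
level higher in the tower -/
lemma coverT (M : A) (g : ℕ) :
    ∃ (K Q : A) (κ : K ⟶ Q) (q : Q ⟶ TObj M g) (wq : κ ≫ q = 0),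
      (ShortComplex.mk κ q wq).ShortExact ∧ Projective Q ∧
      Q ∈ addClosure ({TObj M g} : Set A) ∧ K ∈ addClosure ({TObj M (g+1)} : Set A) := by
  induction g with
  | zero =>
      have hB := biprodSE _ _ (kernelSE (Projective.π (Omg M 0))) (idSE₂ (Projective.over (Omg M 0)))
      refine ⟨_, _, _, _, _, hB, inferInstance, ?_, ?_⟩
      · exact addClosure_mem_biprod (pover_mem M (Nat.zero_le 0)) (pover_mem M (Nat.zero_le 0))
      · exact addClosure_mem_biprod (omg_mem M (Nat.le_refl 1))
          (mem_addClosure_of_isZero (isZero_zero A))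
  | succ g ih =>
      obtain ⟨K, Q, κ, q, wq, hse, hproj, hQ, hK⟩ := ih
      have hB := biprodSE _ _ (kernelSE (Projective.π (Omg M (g+1)))) (idSE₂ (Projective.over (Omg M (g+1))))
      have hg := biprodSE _ _ hB hse
      refine ⟨_, _, _, _, _, hg, ?_, ?_, ?_⟩
      · have : Projective (Projective.over (Omg M (g+1)) ⊞ Projective.over (Omg M (g+1))) :=
          inferInstance
        exact inferInstance
      · exact addClosure_mem_biprod
          (addClosure_mem_biprod (pover_mem M (Nat.le_refl (g+1))) (pover_mem M (Nat.le_refl (g+1))))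
          (gmono M (Nat.le_succ g) hQ)
      · refine addClosure_mem_biprod (addClosure_mem_biprod (omg_mem M (Nat.le_refl (g+2)))
          (mem_addClosure_of_isZero (isZero_zero A))) (gmono M (Nat.le_succ (g+1)) hK)

/-- cover SES of `pow (TObj M g) n` -/
lemma coverPow (M : A) (g n : ℕ) :
    ∃ (K Q : A) (κ : K ⟶ Q) (q : Q ⟶ pow (TObj M g) n) (wq : κ ≫ q = 0),
      (ShortComplex.mk κ q wq).ShortExact ∧ Projective Q ∧
      Q ∈ addClosure ({TObj M g} : Set A) ∧ K ∈ addClosure ({TObj M (g+1)} : Set A) := by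
  induction n with
  | zero =>
      refine ⟨_, _, _, _, _, idSE₁ (0 : A), inferInstance,
        mem_addClosure_of_isZero (isZero_zero A), mem_addClosure_of_isZero (isZero_zero A)⟩
  | succ n ih =>
      obtain ⟨K, Q, κ, q, wq, hse, hproj, hQ, hK⟩ := ih
      obtain ⟨K', Q', κ', q', wq', hse', hproj', hQ', hK'⟩ := coverT M g
      have hg := biprodSE _ _ hse' hse
      exact ⟨_, _, _, _, _, hg, inferInstance,
        addClosure_mem_biprod hQ' hQ, addClosure_mem_biprod hK' hK⟩

/-- every object of `addClosure {TObj M g}` admits a projective cover datum with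
complement and kernel controlled -/
lemma coverOf (M : A) (g : ℕ) {Z : A} (hZ : Z ∈ addClosure ({TObj M g} : Set A)) :
    ∃ (Z' R K Q : A) (σ : (Z ⊞ Z') ≅ R) (κ : K ⟶ Q) (q : Q ⟶ R) (wq : κ ≫ q = 0),
      (ShortComplex.mk κ q wq).ShortExact ∧ Projective Q ∧
      Q ∈ addClosure ({TObj M g} : Set A) ∧ K ∈ addClosure ({TObj M (g+1)} : Set A) ∧
      Z' ∈ addClosure ({TObj M g} : Set A) := by
  obtain ⟨n, Y, ⟨e⟩⟩ := mem_addClosure_singleton_iff.1 hZ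
  obtain ⟨K, Q, κ, q, wq, hse, hproj, hQ, hK⟩ := coverPow M g n
  refine ⟨Y, pow (TObj M g) n, K, Q, e, κ, q, wq, hse, hproj, hQ, hK, ?_⟩
  exact mem_addClosure_singleton_iff.2 ⟨n, ⟨Z, ⟨(biprod.braiding Y Z).trans e⟩⟩⟩

end Tower

/-! ### the key pullback lemma -/

set_option maxHeartbeats 2000000 in
/-- Given a SES `Y → N → Z`, an iso `Z ⊞ Z' ≅ R` and a SES `K → Q → R` with `Q`
projective, there is a SES `K → W → N ⊞ Z'` with `W ≅ Y ⊞ Q`. -/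
lemma F1 {Y N Z : A} (u : Y ⟶ N) (p : N ⟶ Z) (w : u ≫ p = 0)
    (hS : (ShortComplex.mk u p w).ShortExact)
    {Z' R : A} (σ : (Z ⊞ Z') ≅ R)
    {K Q : A} (κ : K ⟶ Q) (q : Q ⟶ R) (wq : κ ≫ q = 0)
    (hSq : (ShortComplex.mk κ q wq).ShortExact) [Projective Q] :
    ∃ (Wm : A) (f : K ⟶ Wm) (h : Wm ⟶ N ⊞ Z') (w2 : f ≫ h = 0),
      (ShortComplex.mk f h w2).ShortExact ∧ Nonempty (Wm ≅ Y ⊞ Q) := by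
  have hφ := inflateSE (ShortComplex.mk u p w) hS Z' R σ
  set φ : N ⊞ Z' ⟶ R := biprod.map p (𝟙 Z') ≫ σ.hom with hφdef
  -- SES A : K → pullback q φ → N ⊞ Z'
  have hA := pullbackSE (ShortComplex.mk κ q wq) hSq (t := φ)
  -- SES B : Y → pullback φ q → Q, split since Q is projective
  have hB := pullbackSE _ hφ (t := q)
  haveI : Epi (pullback.snd φ q) := hB.epi_g
  set s : Q ⟶ pullback φ q := Projective.factorThru (𝟙 Q) (pullback.snd φ q) with hsdef
  have hs : s ≫ pullback.snd φ q = 𝟙 Q := Projective.factorThru_comp _ _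
  obtain ⟨eB⟩ := splitSE hB s hs
  refine ⟨pullback q φ, _, _, _, hA, ⟨(pullbackSymmetry q φ).trans eB⟩⟩

/-! ### transport of short exact sequences along isomorphisms -/

lemma seOfIsos {X₁ X₂ X₃ Y₁ Y₂ Y₃ : A} (f : X₁ ⟶ X₂) (g : X₂ ⟶ X₃) (w : f ≫ g = 0)
    (hS : (ShortComplex.mk f g w).ShortExact)
    (e₁ : X₁ ≅ Y₁) (e₂ : X₂ ≅ Y₂) (e₃ : X₃ ≅ Y₃) :
    (ShortComplex.mk (e₁.inv ≫ f ≫ e₂.hom) (e₂.inv ≫ g ≫ e₃.hom)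
      (by simp [reassoc_of% w])).ShortExact := by
  exact ShortComplex.shortExact_of_iso
    (ShortComplex.isoMk e₁ e₂ e₃ (by simp) (by simp) :
      (ShortComplex.mk f g w) ≅ _) hS

/-! ### stacks of extensions -/

section Stacks
variable [EnoughProjectives A]

/-- `Stk M g s Z` : `Z` has a filtration with `s` layers, each of which lies in
`addClosure {TObj M g}`. -/
def Stk (M : A) (g : ℕ) : ℕ → A → Prop
  | 0, Z => IsZero Z
  | s + 1, Z => ∃ (B C : A) (f : B ⟶ Z) (h : Z ⟶ C) (w : f ≫ h = 0),
      (ShortComplex.mk f h w).ShortExact ∧ B ∈ addClosure ({TObj M g} : Set A) ∧ Stk M g s C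

lemma stk_iso (M : A) (g : ℕ) : ∀ (s : ℕ) {Z Z' : A} (_ : Z' ≅ Z),
    Stk M g s Z → Stk M g s Z'
  | 0, Z, Z', e, h => h.of_iso e
  | s + 1, Z, Z', e, h => by
      obtain ⟨B, C, f, hmap, w, hse, hB, hC⟩ := h
      exact ⟨B, C, _, _, _,
        seOfIsos f hmap w hse (Iso.refl B) e.symm (Iso.refl C), hB, hC⟩

/-- The main induction: pulling a stack back through a short exact sequence. -/
lemma PSI (M : A) : ∀ (s g : ℕ) (Y N C : A) (u : Y ⟶ N) (p : N ⟶ C)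
    (w : u ≫ p = 0), (ShortComplex.mk u p w).ShortExact →
    N ∈ addClosure ({TObj M (g+1)} : Set A) → Stk M g s C →
    ∃ RR : A, RR ∈ addClosure ({TObj M (g+1)} : Set A) ∧ Projective RR ∧
      Stk M (g+1) (s+1) (Y ⊞ RR) := by
  intro s
  induction s with
  | zero =>
      intro g Y N C u p w hse hN hC
      have hZC : IsZero C := hC
      haveI : IsIso ((ShortComplex.mk u p w).f) := seIsoOfZero₃ hse hZC
      refine ⟨0, mem_addClosure_of_isZero (isZero_zero A), inferInstance, ?_⟩
      refine ⟨Y ⊞ (0:A), (0:A), 𝟙 _, 0, by simp, idSE₁ _, ?_, isZero_zero A⟩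
      exact addClosure_mem_biprod
        (mem_addClosure_of_iso (asIso ((ShortComplex.mk u p w).f) : Y ≅ N) hN)
        (mem_addClosure_of_isZero (isZero_zero A))
  | succ s ih =>
      intro g Y N C u p w hse hN hC
      obtain ⟨A0, C₂, a, c, wc, hseC, hA0, hC₂⟩ := hC
      haveI : Epi p := hse.epi_g
      -- pullback SES : Y → pullback p a → A0
      have hSa := pullbackSE (ShortComplex.mk u p w) hse (t := a)
      -- cover of A0
      obtain ⟨Z', R, K, Q, σ, κ, q, wq, hseq, hproj, hQ, hK, hZ'⟩ := coverOf M g hA0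
      haveI : Projective Q := hproj
      -- key lemma
      obtain ⟨Wm, ff, hh, w2, hseW, ⟨eW⟩⟩ := F1 _ _ _ hSa σ κ q wq hseq
      -- composite SES : pullback p a → N → C₂
      have hSb := compositeSE (ShortComplex.mk a c wc) hseC p
      -- augment by Z' : (pullback p a ⊞ Z') → (N ⊞ Z') → (C₂ ⊞ 0)
      have hSb2 := biprodSE _ _ hSb (idSE₁ Z')
      have hC₂0 : Stk M g s (C₂ ⊞ (0:A)) := stk_iso M g s (biprodZeroIso C₂) hC₂
      obtain ⟨R₂, hR₂mem, hR₂proj, hR₂stk⟩ := ih g _ _ _ _ _ _ hSb2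
        (addClosure_mem_biprod hN (gmono M (Nat.le_succ g) hZ')) hC₂0
      haveI : Projective R₂ := hR₂proj
      -- final assembly : (K ⊞ 0) → (Wm ⊞ R₂) → ((pullback p a ⊞ Z') ⊞ R₂)
      have hfin := biprodSE _ _ hseW (idSE₂ R₂)
      refine ⟨Q ⊞ R₂, addClosure_mem_biprod (gmono M (Nat.le_succ g) hQ) hR₂mem,
        inferInstance, ?_⟩
      refine stk_iso M (g+1) (s+1+1)
        ((biprod.associator Y Q R₂).symm.trans (biprod.mapIso eW.symm (Iso.refl R₂))) ?_
      exact ⟨K ⊞ (0:A), (pullback p a ⊞ Z') ⊞ R₂, _, _, _, hfin,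
        addClosure_mem_biprod hK (mem_addClosure_of_isZero (isZero_zero A)), hR₂stk⟩

end Stacks

/-! ### from the repdim data to stacks and brackets -/

lemma mem_addClosure_of_mem {S : Set A} {X : A} (h : X ∈ S) : X ∈ addClosure S :=
  ⟨1, fun _ => X, 0, fun _ => h, ⟨powIso X 1⟩⟩

lemma smd_mem_addClosure {S : Set A} {X W : A} (h : Smd X W) (hW : W ∈ addClosure S) :
    X ∈ addClosure S := by
  obtain ⟨n, f, Y, hf, ⟨e⟩⟩ := hW
  obtain ⟨Y', ⟨e'⟩⟩ := h.trans ⟨Y, ⟨e⟩⟩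
  exact ⟨n, f, Y', hf, ⟨e'⟩⟩

section Master
variable [EnoughProjectives A]

/-- plain coresolutions (forgetting the `Hom`-exactness data) -/
def PlainCores (M : A) : ℕ → A → Prop
  | 0, X => X ∈ addClosure ({M} : Set A)
  | n + 1, X => ∃ (N C : A) (u : X ⟶ N) (p : N ⟶ C) (w : u ≫ p = 0),
      (ShortComplex.mk u p w).ShortExact ∧ N ∈ addClosure ({M} : Set A) ∧ PlainCores M n C

lemma coresHomExact_plainCores (M : A) :
    ∀ (n : ℕ) (X : A), CoresHomExact M n X → PlainCores M n X
  | 0, _, h => h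
  | n + 1, X, h => by
      obtain ⟨S, hSE, h1, h2, _, hrec⟩ := h
      exact ⟨S.X₂, S.X₃, _, _, _,
        seOfIsos S.f S.g S.zero hSE (eqToIso h1) (Iso.refl _) (Iso.refl _), h2,
        coresHomExact_plainCores M n _ hrec⟩

lemma masterStk (M : A) : ∀ (t : ℕ) (Y : A), PlainCores M t Y →
    ∃ RR : A, Projective RR ∧ RR ∈ addClosure ({TObj M t} : Set A) ∧
      Stk M t (t + 1) (Y ⊞ RR) := by
  intro t
  induction t with
  | zero =>
      intro Y hY
      refine ⟨0, inferInstance, mem_addClosure_of_isZero (isZero_zero A), ?_⟩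
      refine ⟨Y ⊞ (0:A), (0:A), 𝟙 _, 0, by simp, idSE₁ _, ?_, isZero_zero A⟩
      have hY0 : Y ∈ addClosure ({TObj M 0} : Set A) :=
        addClosure_trans 1
          ((Smd.left M (Projective.over M)).iso_right (biprodZeroIso _).symm) hY
      exact addClosure_mem_biprod hY0 (mem_addClosure_of_isZero (isZero_zero A))
  | succ t ih =>
      intro Y hY
      obtain ⟨N, C, u, p, w, hse, hN, hC⟩ := hY
      obtain ⟨RC, hRCproj, hRCmem, hRCstk⟩ := ih C hC
      have hse2 := biprodSE _ _ hse (idSE₂ RC)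
      have hse3 := seOfIsos _ _ _ hse2 (biprodZeroIso Y) (Iso.refl _) (Iso.refl _)
      have hNmem : (N ⊞ RC) ∈ addClosure ({TObj M (t+1)} : Set A) := by
        refine addClosure_mem_biprod ?_ (gmono M (Nat.le_succ t) hRCmem)
        exact gmono M (Nat.zero_le (t+1))
          (addClosure_trans 1
            ((Smd.left M (Projective.over M)).iso_right (biprodZeroIso _).symm) hN)
      obtain ⟨RR, hmem, hproj, hstk⟩ :=
        PSI M (t+1) t Y (N ⊞ RC) (C ⊞ RC) _ _ _ hse3 hNmem hRCstk
      exact ⟨RR, hproj, hmem, hstk⟩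

lemma stkToBracket (M : A) (g : ℕ) : ∀ (s : ℕ) (Z : A), Stk M g s Z →
    Z ∈ bracket ({TObj M g} : Set A) s
  | 0, _, h => h
  | 1, Z, h => by
      obtain ⟨B, C, f, hm, w, hse, hB, hC⟩ := h
      haveI := seIsoOfZero₃ hse (hC : IsZero C)
      exact mem_addClosure_of_iso
        ((asIso ((ShortComplex.mk f hm w).f)).symm : Z ≅ B) hB
  | s + 2, Z, h => by
      obtain ⟨B, C, f, hm, w, hse, hB, hC⟩ := h
      have hC' := stkToBracket M g (s + 1) C hC
      exact mem_addClosure_of_mem ⟨ShortComplex.mk f hm w, hse, rfl, hB, hC'⟩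

lemma bracket_summand (T : A) : ∀ (n : ℕ) {X W : A}, Smd X W →
    W ∈ bracket ({T} : Set A) (n + 1) → X ∈ bracket ({T} : Set A) (n + 1)
  | 0, _, _, h, hW => smd_mem_addClosure h hW
  | _ + 1, _, _, h, hW => smd_mem_addClosure h hW

end Master

end
end ExtRepAux
/-- If an abelian category with enough projectives and enough injectives admits an
additive generating object, then its extension dimension is at most its representation
dimension minus two. -/
theorem extDim_le_repDim_sub_two (A : Type u) [Category.{v} A] [Abelian A]
    [EnoughProjectives A] [EnoughInjectives A] (hG : HasAddGenerator A) :
    extDim A ≤ repDim A - 2 := by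
  classical
  by_cases hne : {n : ℕ∞ | ∃ i : ℕ, (i : ℕ∞) = n ∧ 2 ≤ i ∧
      ∃ M : A, ∀ X : A, ResHomExact M (i - 2) X ∧ CoresHomExact M (i - 2) X}.Nonempty
  · obtain ⟨m, hm, hmin⟩ := wellFounded_lt.has_min _ hne
    have hrep : repDim A = m :=
      le_antisymm (sInf_le hm) (le_sInf fun b hb => not_lt.1 fun hlt => hmin b hb hlt)
    obtain ⟨i, hi, h2i, M, hM⟩ := hm
    set d : ℕ := i - 2 with hd
    have hbr : bracket ({ExtRepAux.TObj M d} : Set A) (d + 1) = Set.univ := by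
      ext X
      simp only [Set.mem_univ, iff_true]
      have hc := ExtRepAux.coresHomExact_plainCores M d X (hM X).2
      obtain ⟨RR, _, _, hstk⟩ := ExtRepAux.masterStk M d X hc
      exact ExtRepAux.bracket_summand _ d (ExtRepAux.Smd.left X RR)
        (ExtRepAux.stkToBracket M d (d + 1) _ hstk)
    have h1 : extDim A ≤ (d : ℕ∞) :=
      sInf_le ⟨d, ExtRepAux.TObj M d, rfl, hbr⟩
    have h2 : (d : ℕ∞) = (i : ℕ∞) - 2 := by
      rw [hd]
      exact_mod_cast ENat.coe_sub i 2
    rw [hrep, ← hi, ← h2]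
    exact h1
  · have hrep : repDim A = ⊤ := by
      rw [repDim, Set.not_nonempty_iff_eq_empty.1 hne, sInf_empty]
    rw [hrep]
    rw [ENat.top_sub_ofNat]
    exact le_top
end
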